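/- Let ν be a non-degenerate probability measure on ℝ with support bounded from above and finite mean m₀ = m₀(ν), α > 0, and ρ = ν^{⊎α} its boolean convolution power. Then the variance functions of the CSK families generated by ν and by ρ exist, and there is ε > 0 such that for all m ∈ (α m₀, α m₀ + ε): V_ρ(m) = α V_ν(m/α) + m(m − α m₀)(1/α − 1). -/

import Mathlib

open MeasureTheory Filter Topology Set

/-- The Cauchy transform `G_ν(z) = ∫ 1/(z-x) dν(x)` of a measure on `ℝ`, for real `z`. -/
noncomputable def cauchyT (ν : Measure ℝ) (z : ℝ) : ℝ := ∫ x, (z - x)⁻¹ ∂ν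

/-- The K-transform (self-energy) `K_ν(z) = z - 1/G_ν(z)`. -/
noncomputable def kT (ν : Measure ℝ) (z : ℝ) : ℝ := z - (cauchyT ν z)⁻¹

/-- The Cauchy transform at a complex argument. -/
noncomputable def cauchyTC (ν : Measure ℝ) (z : ℂ) : ℂ := ∫ x, (z - (x : ℂ))⁻¹ ∂ν

/-- The K-transform at a complex argument. -/
noncomputable def kTC (ν : Measure ℝ) (z : ℂ) : ℂ := z - (cauchyTC ν z)⁻¹

/-- `M_ν(θ) = ∫ 1/(1-θx) dν(x)`. -/
noncomputable def Mgen (ν : Measure ℝ) (θ : ℝ) : ℝ := ∫ x, (1 - θ * x)⁻¹ ∂ν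

/-- The mean of `P_{(θ,ν)}`: `k_ν(θ) = (M_ν(θ) - 1)/(θ M_ν(θ))`. -/
noncomputable def kMean (ν : Measure ℝ) (θ : ℝ) : ℝ := (Mgen ν θ - 1) / (θ * Mgen ν θ)

/-- `B(ν) = max(0, sup supp(ν)) = 1/θ₊`. -/
noncomputable def Bv (ν : Measure ℝ) : ℝ := max 0 (sInf {b : ℝ | ν (Set.Ioi b) = 0})

/-- Pseudo-variance function `𝕍_ν(m) = m (1/ψ_ν(m) - m)`, expressed through the
inverse `ψ` of the mean parametrization `k_ν`. -/
noncomputable def pseudoVar (ψ : ℝ → ℝ) (m : ℝ) : ℝ := m * ((ψ m)⁻¹ - m)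

set_option linter.unusedSectionVars false
set_option maxHeartbeats 1000000

section BPVHelpers

variable {μ : Measure ℝ} [IsProbabilityMeasure μ] {b m0 : ℝ}

lemma ae_le_of_Ioi_null (hb : μ (Set.Ioi b) = 0) : ∀ᵐ t ∂μ, t ≤ b := by
  rw [ae_iff]
  have : {a | ¬a ≤ b} = Set.Ioi b := by ext t; simp [Set.mem_Ioi, not_le]
  rw [this, hb]

lemma integrable_inv_sub (hb : μ (Set.Ioi b) = 0) {x : ℝ} (hx : b < x) :
    Integrable (fun t => (x - t)⁻¹) μ := by
  refine Integrable.mono' (integrable_const ((x - b)⁻¹)) ?_ ?_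
  · exact (measurable_const.sub measurable_id).inv.aestronglyMeasurable
  · filter_upwards [ae_le_of_Ioi_null hb] with t ht
    have h1 : 0 < x - t := by linarith
    rw [Real.norm_eq_abs, abs_of_pos (inv_pos.2 h1)]
    exact inv_anti₀ (by linarith) (by linarith)

lemma mean_le (hb : μ (Set.Ioi b) = 0) (hint : Integrable (fun x : ℝ => x) μ)
    (hm0 : m0 = ∫ x, x ∂μ) : m0 ≤ b := by
  rw [hm0]
  calc ∫ x, x ∂μ ≤ ∫ _, b ∂μ :=
        integral_mono_ae hint (integrable_const b) (ae_le_of_Ioi_null hb)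
    _ = b := by simp

lemma cauchyT_ge (hb : μ (Set.Ioi b) = 0) (hint : Integrable (fun x : ℝ => x) μ)
    (hm0 : m0 = ∫ x, x ∂μ) {x : ℝ} (hx : b < x) :
    (x - m0)⁻¹ ≤ cauchyT μ x := by
  have hm0b : m0 ≤ b := mean_le hb hint hm0
  have hu0 : 0 < x - m0 := by linarith
  have hg : ∫ t, (2*(x-m0) - (x-t))/(x-m0)^2 ∂μ = (x - m0)⁻¹ := by
    have : ∫ t, (2*(x-m0) - (x-t))/(x-m0)^2 ∂μ
        = (∫ t, (2*(x-m0) - (x-t)) ∂μ) / (x-m0)^2 := by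
      rw [integral_div]
    rw [this]
    have h2 : ∫ t, (2*(x-m0) - (x-t)) ∂μ = x - m0 := by
      have : (fun t : ℝ => 2*(x-m0) - (x-t)) = fun t : ℝ => (x - 2*m0) + t := by
        ext t; ring
      rw [this, integral_add (integrable_const _) hint, integral_const, ← hm0]
      simp; ring
    rw [h2]
    field_simp
  rw [← hg]
  refine integral_mono_ae ?_ (integrable_inv_sub hb hx) ?_
  · apply Integrable.div_const
    apply Integrable.sub (integrable_const _)
    exact (integrable_const x).sub hint
  · filter_upwards [ae_le_of_Ioi_null hb] with t ht
    have hu : 0 < x - t := by linarith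
    rw [div_le_iff₀ (by positivity), ← sub_nonneg]
    have key : (x-t)⁻¹ * (x-m0)^2 - (2*(x-m0) - (x-t))
        = ((x-t) - (x-m0))^2 / (x-t) := by
      field_simp
      ring
    rw [key]
    positivity

lemma cauchyT_pos (hb : μ (Set.Ioi b) = 0) (hint : Integrable (fun x : ℝ => x) μ)
    (hm0 : m0 = ∫ x, x ∂μ) {x : ℝ} (hx : b < x) : 0 < cauchyT μ x := by
  have hm0b : m0 ≤ b := mean_le hb hint hm0
  have := cauchyT_ge hb hint hm0 hx
  have : (0:ℝ) < (x - m0)⁻¹ := by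
    apply inv_pos.2; linarith
  linarith [cauchyT_ge hb hint hm0 hx]

lemma cauchyT_le (hb : μ (Set.Ioi b) = 0) {x : ℝ} (hx : b < x) :
    cauchyT μ x ≤ (x - b)⁻¹ := by
  have : cauchyT μ x ≤ ∫ _, (x-b)⁻¹ ∂μ := by
    refine integral_mono_ae (integrable_inv_sub hb hx) (integrable_const _) ?_
    filter_upwards [ae_le_of_Ioi_null hb] with t ht
    exact inv_anti₀ (by linarith) (by linarith)
  simpa using this

lemma cauchyT_gt (hb : μ (Set.Ioi b) = 0) (hint : Integrable (fun x : ℝ => x) μ)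
    (hm0 : m0 = ∫ x, x ∂μ) (hnd : μ ({m0}ᶜ) ≠ 0) {x : ℝ} (hx : b < x) :
    (x - m0)⁻¹ < cauchyT μ x := by
  have hm0b : m0 ≤ b := mean_le hb hint hm0
  have hu0 : 0 < x - m0 := by linarith
  set g : ℝ → ℝ := fun t => (x-t)⁻¹ - (2*(x-m0) - (x-t))/(x-m0)^2 with hgdef
  have hgint : Integrable g μ := by
    apply Integrable.sub (integrable_inv_sub hb hx)
    apply Integrable.div_const
    exact (integrable_const _).sub ((integrable_const x).sub hint)
  have hnonneg : 0 ≤ᵐ[μ] g := by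
    filter_upwards [ae_le_of_Ioi_null hb] with t ht
    have hu : 0 < x - t := by linarith
    have key : g t = ((x-t) - (x-m0))^2 / ((x-t) * (x-m0)^2) := by
      simp only [hgdef]; field_simp; ring
    rw [key]; positivity
  have hpos : 0 < ∫ t, g t ∂μ := by
    rw [integral_pos_iff_support_of_nonneg_ae hnonneg hgint]
    have hsub : ({m0}ᶜ ∩ Set.Iic b) ⊆ Function.support g := by
      intro t ⟨ht1, ht2⟩
      have hu : 0 < x - t := by simp at ht2; linarith
      have key : g t = ((x-t) - (x-m0))^2 / ((x-t) * (x-m0)^2) := by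
        simp only [hgdef]; field_simp; ring
      simp only [Function.mem_support, key]
      have htm : t ≠ m0 := ht1
      have : (x-t) - (x-m0) ≠ 0 := by intro h; apply htm; linarith [sub_eq_zero.mp h]
      positivity
    have h1 : μ ({m0}ᶜ) ≤ μ (Function.support g) := by
      calc μ ({m0}ᶜ) ≤ μ (({m0}ᶜ ∩ Set.Iic b) ∪ Set.Ioi b) := by
            apply measure_mono; intro t ht
            by_cases h : t ≤ b
            · exact Or.inl ⟨ht, h⟩
            · exact Or.inr (by simpa [Set.mem_Ioi] using not_le.mp h)
        _ ≤ μ ({m0}ᶜ ∩ Set.Iic b) + μ (Set.Ioi b) := measure_union_le _ _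
        _ = μ ({m0}ᶜ ∩ Set.Iic b) := by rw [hb, add_zero]
        _ ≤ μ (Function.support g) := measure_mono hsub
    exact lt_of_lt_of_le (by simpa [pos_iff_ne_zero] using hnd) h1
  have hsplit : ∫ t, g t ∂μ = cauchyT μ x - (x-m0)⁻¹ := by
    have h1 : ∫ t, g t ∂μ = cauchyT μ x - ∫ t, (2*(x-m0) - (x-t))/(x-m0)^2 ∂μ := by
      exact integral_sub (integrable_inv_sub hb hx)
        (((integrable_const _).sub ((integrable_const x).sub hint)).div_const _)
    rw [h1]
    congr 1
    -- reuse computation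
    have : ∫ t, (2*(x-m0) - (x-t))/(x-m0)^2 ∂μ
        = (∫ t, (2*(x-m0) - (x-t)) ∂μ) / (x-m0)^2 := integral_div _ _
    rw [this]
    have h2 : ∫ t, (2*(x-m0) - (x-t)) ∂μ = x - m0 := by
      have : (fun t : ℝ => 2*(x-m0) - (x-t)) = fun t : ℝ => (x - 2*m0) + t := by
        ext t; ring
      rw [this, integral_add (integrable_const _) hint, integral_const, ← hm0]
      simp; ring
    rw [h2]; field_simp
  linarith [hsplit ▸ hpos]

-- from previous chunks (axiomatize here for speed; will concatenate later)
lemma norm_inv_sub_le {z : ℂ} {t : ℝ} (ht : t ≤ b) (hz : b < z.re) :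
    ‖(z - (t : ℂ))⁻¹‖ ≤ (z.re - b)⁻¹ := by
  rw [norm_inv]
  have h1 : z.re - b ≤ ‖z - (t:ℂ)‖ := by
    calc z.re - b ≤ z.re - t := by linarith
    _ = (z - (t:ℂ)).re := by simp
    _ ≤ |(z - (t:ℂ)).re| := le_abs_self _
    _ ≤ ‖z - (t:ℂ)‖ := Complex.abs_re_le_norm _
  exact inv_anti₀ (by linarith) h1

lemma integrable_inv_sub_C (hb : μ (Set.Ioi b) = 0) {z : ℂ} (hz : b < z.re) :
    Integrable (fun t : ℝ => (z - (t : ℂ))⁻¹) μ := by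
  refine Integrable.mono' (integrable_const ((z.re - b)⁻¹)) ?_ ?_
  · exact ((measurable_const.sub Complex.measurable_ofReal).inv).aestronglyMeasurable
  · filter_upwards [ae_le_of_Ioi_null hb] with t ht
    exact norm_inv_sub_le ht hz

lemma cauchyTC_re (hb : μ (Set.Ioi b) = 0) {z : ℂ} (hz : b < z.re) :
    (cauchyTC μ z).re = ∫ t, ((z - (t:ℂ))⁻¹).re ∂μ := by
  have := integral_re (𝕜 := ℂ) (integrable_inv_sub_C hb hz) (μ := μ)
  simpa [cauchyTC, RCLike.re_to_complex] using this.symm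

lemma re_inv_sub (z : ℂ) (t : ℝ) :
    ((z - (t:ℂ))⁻¹).re = (z.re - t) / ((z.re - t)^2 + z.im^2) := by
  rw [Complex.inv_re, Complex.normSq_apply, Complex.sub_re, Complex.sub_im,
    Complex.ofReal_re, Complex.ofReal_im]
  ring_nf

lemma cauchyTC_re_ge (hb : μ (Set.Ioi b) = 0) (hint : Integrable (fun x : ℝ => x) μ)
    (hm0 : m0 = ∫ x, x ∂μ) {z : ℂ} (hz : b + 1 ≤ z.re) (hz2 : |z.im| ≤ 1) :
    (2*(z.re - m0))⁻¹ ≤ (cauchyTC μ z).re := by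
  have hbz : b < z.re := by linarith
  rw [cauchyTC_re hb hbz]
  have step1 : (2:ℝ)⁻¹ * cauchyT μ z.re ≤ ∫ t, ((z - (t:ℂ))⁻¹).re ∂μ := by
    rw [cauchyT, ← integral_const_mul]
    refine integral_mono_ae ((integrable_inv_sub hb hbz).const_mul _) ?_ ?_
    · exact (integrable_inv_sub_C hb hbz).re
    · filter_upwards [ae_le_of_Ioi_null hb] with t ht
      rw [re_inv_sub]
      have hu : (1:ℝ) ≤ z.re - t := by linarith
      have h2 : (z.re - t)^2 + z.im^2 ≤ 2*(z.re - t)^2 := by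
        have him := abs_le.mp hz2
        nlinarith
      have hup : 0 < (z.re - t)^2 + z.im^2 := by positivity
      rw [le_div_iff₀ hup, mul_assoc]
      have hu0 : (0:ℝ) < z.re - t := by linarith
      have hS : (z.re - t)⁻¹ * ((z.re - t) ^ 2 + z.im ^ 2) ≤ 2*(z.re - t) := by
        rw [inv_mul_le_iff₀ hu0]; nlinarith
      linarith
  have step2 : (z.re - m0)⁻¹ ≤ cauchyT μ z.re := cauchyT_ge hb hint hm0 hbz
  have hm0b : m0 ≤ b := mean_le hb hint hm0
  calc (2*(z.re - m0))⁻¹ = 2⁻¹ * (z.re - m0)⁻¹ := by rw [mul_inv]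
    _ ≤ 2⁻¹ * cauchyT μ z.re := by linarith [step2]
    _ ≤ _ := step1

lemma cauchyTC_ne_zero (hb : μ (Set.Ioi b) = 0) (hint : Integrable (fun x : ℝ => x) μ)
    (hm0 : m0 = ∫ x, x ∂μ) {z : ℂ} (hz : b + 1 ≤ z.re) (hz2 : |z.im| ≤ 1) :
    cauchyTC μ z ≠ 0 := by
  intro h
  have hm0b : m0 ≤ b := mean_le hb hint hm0
  have h1 := cauchyTC_re_ge hb hint hm0 hz hz2
  rw [h] at h1
  simp only [Complex.zero_re] at h1
  have h2 : (0:ℝ) < (2*(z.re - m0))⁻¹ := by apply inv_pos.2; linarith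
  linarith

-- real K-transform bounds
lemma kT_mem (hb : μ (Set.Ioi b) = 0) (hint : Integrable (fun x : ℝ => x) μ)
    (hm0 : m0 = ∫ x, x ∂μ) {x : ℝ} (hx : b < x) :
    m0 ≤ kT μ x ∧ kT μ x ≤ b := by
  have hm0b : m0 ≤ b := mean_le hb hint hm0
  have hG1 : (x - m0)⁻¹ ≤ cauchyT μ x := cauchyT_ge hb hint hm0 hx
  have hG2 : cauchyT μ x ≤ (x - b)⁻¹ := cauchyT_le hb hx
  have hGpos : 0 < cauchyT μ x := lt_of_lt_of_le (by apply inv_pos.2; linarith) hG1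
  constructor
  · have : (cauchyT μ x)⁻¹ ≤ x - m0 := by
      rw [inv_le_comm₀ hGpos (by linarith)]
      exact hG1
    simp only [kT]; linarith
  · have : x - b ≤ (cauchyT μ x)⁻¹ := by
      rw [le_inv_comm₀ (by linarith) hGpos]
      exact hG2
    simp only [kT]; linarith

lemma kT_gt (hb : μ (Set.Ioi b) = 0) (hint : Integrable (fun x : ℝ => x) μ)
    (hm0 : m0 = ∫ x, x ∂μ) (hnd : μ ({m0}ᶜ) ≠ 0) {x : ℝ} (hx : b < x) :
    m0 < kT μ x := by
  have hm0b : m0 ≤ b := mean_le hb hint hm0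
  have hG1 : (x - m0)⁻¹ < cauchyT μ x := cauchyT_gt hb hint hm0 hnd hx
  have hGpos : 0 < cauchyT μ x := lt_trans (by apply inv_pos.2; linarith) hG1
  have : (cauchyT μ x)⁻¹ < x - m0 := by
    rw [inv_lt_comm₀ hGpos (by linarith)]
    exact hG1
  simp only [kT]; linarith

lemma integrable_weighted (hb : μ (Set.Ioi b) = 0)
    (hint : Integrable (fun x : ℝ => x) μ) {z : ℂ} (hz : b < z.re) :
    Integrable (fun t : ℝ => ((t:ℂ) - (m0:ℂ)) * (z - (t:ℂ))⁻¹) μ := by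
  refine Integrable.mono' (((hint.sub (integrable_const m0)).abs).mul_const ((z.re - b)⁻¹)) ?_ ?_
  · exact ((Complex.measurable_ofReal.sub measurable_const).mul
      ((measurable_const.sub Complex.measurable_ofReal).inv)).aestronglyMeasurable
  · filter_upwards [ae_le_of_Ioi_null hb] with t ht
    rw [norm_mul]
    have h1 : ‖(t:ℂ) - (m0:ℂ)‖ = |t - m0| := by
      rw [← Complex.ofReal_sub, Complex.norm_real, Real.norm_eq_abs]
    rw [h1]
    exact mul_le_mul_of_nonneg_left (norm_inv_sub_le ht hz) (abs_nonneg _)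

lemma num_eq (hb : μ (Set.Ioi b) = 0) (hint : Integrable (fun x : ℝ => x) μ)
    {z : ℂ} (hz : b < z.re) :
    (z - (m0:ℂ)) * cauchyTC μ z - 1 = ∫ t, ((t:ℂ) - (m0:ℂ)) * (z - (t:ℂ))⁻¹ ∂μ := by
  have h1 : (z - (m0:ℂ)) * cauchyTC μ z = ∫ t, (z - (m0:ℂ)) * (z - (t:ℂ))⁻¹ ∂μ := by
    rw [cauchyTC, integral_const_mul]
  have h2 : (1:ℂ) = ∫ _t, (1:ℂ) ∂μ := by simp
  rw [h1]
  nth_rewrite 1 [h2]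
  rw [← integral_sub (((integrable_inv_sub_C hb hz)).const_mul _) (integrable_const 1)]
  refine integral_congr_ae ?_
  filter_upwards [ae_le_of_Ioi_null hb] with t ht
  have hzt : z - (t:ℂ) ≠ 0 := by
    intro h
    have : (z - (t:ℂ)).re = 0 := by rw [h]; simp
    simp only [Complex.sub_re, Complex.ofReal_re] at this
    linarith
  field_simp
  ring

lemma kTC_sub_mean_norm_le (hb : μ (Set.Ioi b) = 0)
    (hint : Integrable (fun x : ℝ => x) μ) (hm0 : m0 = ∫ x, x ∂μ)
    {z : ℂ} (hz : b + 1 ≤ z.re) (hz2 : |z.im| ≤ 1) :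
    ‖kTC μ z - (m0:ℂ)‖ ≤ 2 * (∫ t, |t - m0| ∂μ) * (1 + b - m0) := by
  set C1 : ℝ := ∫ t, |t - m0| ∂μ with hC1
  have hC1nn : 0 ≤ C1 := integral_nonneg (fun t => abs_nonneg _)
  have hm0b : m0 ≤ b := mean_le hb hint hm0
  have hbz : b < z.re := by linarith
  have hGre : (2*(z.re - m0))⁻¹ ≤ (cauchyTC μ z).re := cauchyTC_re_ge hb hint hm0 hz hz2
  have hGpos : 0 < (cauchyTC μ z).re := lt_of_lt_of_le (by apply inv_pos.2; linarith) hGre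
  have hGne : cauchyTC μ z ≠ 0 := by
    intro h; rw [h] at hGpos; simp at hGpos
  have hid : kTC μ z - (m0:ℂ) = ((z - (m0:ℂ)) * cauchyTC μ z - 1) * (cauchyTC μ z)⁻¹ := by
    rw [kTC]; field_simp; ring
  rw [hid, norm_mul, norm_inv]
  have hnum : ‖(z - (m0:ℂ)) * cauchyTC μ z - 1‖ ≤ C1 * (z.re - b)⁻¹ := by
    rw [num_eq hb hint hbz]
    refine le_trans (norm_integral_le_integral_norm _) ?_
    rw [hC1, ← integral_mul_const]
    refine integral_mono_ae ((integrable_weighted hb hint hbz).norm) ?_ ?_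
    · exact ((hint.sub (integrable_const m0)).abs).mul_const _
    · filter_upwards [ae_le_of_Ioi_null hb] with t ht
      rw [norm_mul, ← Complex.ofReal_sub, Complex.norm_real, Real.norm_eq_abs]
      exact mul_le_mul_of_nonneg_left (norm_inv_sub_le ht hbz) (abs_nonneg _)
  have hGnorm : (2*(z.re - m0))⁻¹ ≤ ‖cauchyTC μ z‖ := by
    refine le_trans hGre ?_
    calc (cauchyTC μ z).re ≤ |(cauchyTC μ z).re| := le_abs_self _
      _ ≤ ‖cauchyTC μ z‖ := Complex.abs_re_le_norm _
  have hGinv : ‖cauchyTC μ z‖⁻¹ ≤ 2*(z.re - m0) := by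
    rw [inv_le_comm₀ (norm_pos_iff.mpr hGne) (by nlinarith)]
    exact le_trans (by norm_num) hGnorm
  calc ‖(z - (m0:ℂ)) * cauchyTC μ z - 1‖ * ‖cauchyTC μ z‖⁻¹
      ≤ (C1 * (z.re - b)⁻¹) * (2*(z.re - m0)) := by
        refine mul_le_mul hnum hGinv (by positivity)
          (by apply mul_nonneg hC1nn; apply inv_nonneg.2; linarith)
    _ ≤ 2 * C1 * (1 + b - m0) := by
        have hs : (1:ℝ) ≤ z.re - b := by linarith
        have hinv : (z.re - b)⁻¹ * (z.re - m0) ≤ 1 + b - m0 := by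
          rw [inv_mul_le_iff₀ (by linarith)]
          nlinarith
        nlinarith [mul_le_mul_of_nonneg_left hinv hC1nn]

lemma norm_le_of_im {z : ℂ} {t : ℝ} (hz : 0 < z.im) : ‖(z - (t : ℂ))⁻¹‖ ≤ (z.im)⁻¹ := by
  rw [norm_inv]
  apply inv_anti₀ hz
  calc z.im = (z - (t:ℂ)).im := by simp
    _ ≤ |(z - (t:ℂ)).im| := le_abs_self _
    _ ≤ ‖z - (t:ℂ)‖ := Complex.abs_im_le_norm _

lemma integrable_inv_sub_C_im (μ : Measure ℝ) [IsProbabilityMeasure μ] {z : ℂ} (hz : 0 < z.im) :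
    Integrable (fun t : ℝ => (z - (t : ℂ))⁻¹) μ := by
  refine Integrable.mono' (integrable_const ((z.im)⁻¹)) ?_ ?_
  · exact ((measurable_const.sub Complex.measurable_ofReal).inv).aestronglyMeasurable
  · filter_upwards with t; exact norm_le_of_im hz

lemma im_inv_sub (z : ℂ) (t : ℝ) :
    ((z - (t:ℂ))⁻¹).im = -(z.im / ((z.re - t)^2 + z.im^2)) := by
  rw [Complex.inv_im, Complex.normSq_apply, Complex.sub_re, Complex.sub_im,
    Complex.ofReal_re, Complex.ofReal_im]
  rw [neg_div]
  congr 2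
  · simp
  · ring

lemma cauchyTC_im (μ : Measure ℝ) [IsProbabilityMeasure μ] {z : ℂ} (hz : 0 < z.im) :
    (cauchyTC μ z).im = -∫ t, z.im / ((z.re - t)^2 + z.im^2) ∂μ := by
  have h1 := integral_im (𝕜 := ℂ) (integrable_inv_sub_C_im μ hz)
  simp only [RCLike.im_to_complex] at h1
  rw [cauchyTC, ← h1, ← integral_neg]
  refine integral_congr_ae ?_
  filter_upwards with t
  rw [im_inv_sub]

lemma cauchyTC_im_neg (μ : Measure ℝ) [IsProbabilityMeasure μ] {z : ℂ} (hz : 0 < z.im) :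
    (cauchyTC μ z).im < 0 := by
  rw [cauchyTC_im μ hz, neg_lt, neg_zero]
  have hi : Integrable (fun t : ℝ => z.im / ((z.re - t)^2 + z.im^2)) μ := by
    refine Integrable.mono' (integrable_const ((z.im)⁻¹)) ?_ ?_
    · apply Measurable.aestronglyMeasurable; fun_prop
    · filter_upwards with t
      have h1 : z.im^2 ≤ (z.re - t)^2 + z.im^2 := by nlinarith [sq_nonneg (z.re - t)]
      rw [Real.norm_eq_abs, abs_of_pos (by positivity)]
      rw [div_le_iff₀ (by positivity)]
      rw [inv_mul_eq_div, le_div_iff₀ hz]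
      nlinarith
  rw [integral_pos_iff_support_of_nonneg_ae ?_ hi]
  · have : Function.support (fun t : ℝ => z.im / ((z.re - t)^2 + z.im^2)) = Set.univ := by
      ext t; simp only [Function.mem_support, Set.mem_univ, iff_true]
      positivity
    rw [this]; simp
  · filter_upwards with t; positivity

lemma cauchyTC_ne_zero_im (μ : Measure ℝ) [IsProbabilityMeasure μ] {z : ℂ} (hz : 0 < z.im) :
    cauchyTC μ z ≠ 0 := by
  intro h
  have := cauchyTC_im_neg μ hz
  rw [h] at this; simp at this

lemma cauchyT_pos2 (μ : Measure ℝ) [IsProbabilityMeasure μ] (hb : μ (Set.Ioi b) = 0)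
    {x : ℝ} (hx : b < x) : 0 < cauchyT μ x := by
  have hae : ∀ᵐ t ∂μ, t ≤ b := by
    rw [ae_iff]
    have : {a | ¬a ≤ b} = Set.Ioi b := by ext t; simp [Set.mem_Ioi, not_le]
    rw [this, hb]
  have hint : Integrable (fun t => (x - t)⁻¹) μ := by
    refine Integrable.mono' (integrable_const ((x - b)⁻¹)) ?_ ?_
    · exact (measurable_const.sub measurable_id).inv.aestronglyMeasurable
    · filter_upwards [hae] with t ht
      have h1 : 0 < x - t := by linarith
      rw [Real.norm_eq_abs, abs_of_pos (inv_pos.2 h1)]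
      exact inv_anti₀ (by linarith) (by linarith)
  rw [cauchyT, integral_pos_iff_support_of_nonneg_ae ?_ hint]
  · have hsub : Set.Iic b ⊆ Function.support (fun t : ℝ => (x - t)⁻¹) := by
      intro t ht
      simp only [Set.mem_Iic] at ht
      simp only [Function.mem_support]
      have : 0 < x - t := by linarith
      positivity
    have h1 : μ (Set.Iic b) = 1 := by
      have hc : Set.Iic b = (Set.Ioi b)ᶜ := by ext t; simp
      rw [hc, measure_compl measurableSet_Ioi (measure_ne_top μ _), hb, measure_univ]
      simp
    calc (0:ENNReal) < 1 := by norm_num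
      _ = μ (Set.Iic b) := h1.symm
      _ ≤ μ (Function.support fun t => (x - t)⁻¹) := measure_mono hsub
  · filter_upwards [hae] with t ht
    have : 0 < x - t := by linarith
    positivity

lemma continuous_cauchyTC_horiz (μ : Measure ℝ) [IsProbabilityMeasure μ] {y : ℝ} (hy : 0 < y) :
    Continuous (fun x : ℝ => cauchyTC μ ((x:ℂ) + y * Complex.I)) := by
  refine MeasureTheory.continuous_of_dominated ?_ ?_ (integrable_const (y⁻¹)) ?_
  · intro x
    exact ((measurable_const.sub Complex.measurable_ofReal).inv).aestronglyMeasurable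
  · intro x
    filter_upwards with t
    have h := norm_le_of_im (z := (x:ℂ) + y * Complex.I) (t := t) (by simp [hy])
    simpa using h
  · filter_upwards with t
    apply Continuous.inv₀
    · fun_prop
    · intro x
      intro h
      have : ((x:ℂ) + y * Complex.I - (t:ℂ)).im = 0 := by rw [h]; simp
      simp at this
      linarith

lemma integral_complex_ofReal' (μ : Measure ℝ) (f : ℝ → ℝ) :
    ∫ x, ((f x : ℂ)) ∂μ = ((∫ x, f x ∂μ : ℝ) : ℂ) := by
  have := Complex.ofRealLI.integral_comp_comm f (μ := μ)
  exact integral_ofReal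

lemma cauchyTC_real (x : ℝ) : cauchyTC μ (x:ℂ) = ((cauchyT μ x : ℝ) : ℂ) := by
  rw [cauchyTC, cauchyT, ← integral_complex_ofReal']
  congr 1
  ext t
  push_cast
  rfl

lemma tendsto_cauchyTC_vert (hb : μ (Set.Ioi b) = 0) {x : ℝ} (hx : b < x) :
    Tendsto (fun y : ℝ => cauchyTC μ ((x:ℂ) + y * Complex.I)) (𝓝[>] 0)
      (𝓝 ((cauchyT μ x : ℝ) : ℂ)) := by
  rw [← cauchyTC_real]
  have key : Tendsto (fun y : ℝ => cauchyTC μ ((x:ℂ) + y * Complex.I)) (𝓝[>] 0)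
      (𝓝 (cauchyTC μ (x:ℂ))) := by
    refine MeasureTheory.tendsto_integral_filter_of_dominated_convergence
      (fun _ => (x - b)⁻¹) ?_ ?_ (integrable_const _) ?_
    · filter_upwards with y
      exact ((measurable_const.sub Complex.measurable_ofReal).inv).aestronglyMeasurable
    · filter_upwards with y
      filter_upwards [ae_le_of_Ioi_null hb] with t ht
      have : ((x:ℂ) + y * Complex.I).re = x := by simp
      have h := norm_inv_sub_le (b := b) ht (z := (x:ℂ) + y * Complex.I) (by rw [this]; exact hx)
      rwa [this] at h
    · filter_upwards [ae_le_of_Ioi_null hb] with t ht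
      have hne : (x:ℂ) - (t:ℂ) ≠ 0 := by
        intro h
        have : ((x:ℂ) - (t:ℂ)).re = 0 := by rw [h]; simp
        simp only [Complex.sub_re, Complex.ofReal_re] at this
        linarith
      have hc : ContinuousAt (fun y : ℝ => ((x:ℂ) + y * Complex.I - (t:ℂ))⁻¹) 0 := by
        apply ContinuousAt.inv₀
        · fun_prop
        · simpa using hne
      have := hc.tendsto
      simp only [Complex.ofReal_zero, zero_mul, add_zero] at this
      exact this.mono_left nhdsWithin_le_nhds
  exact key

lemma tendsto_kTC_vert (hb : μ (Set.Ioi b) = 0) {x : ℝ} (hx : b < x) :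
    Tendsto (fun y : ℝ => kTC μ ((x:ℂ) + y * Complex.I)) (𝓝[>] 0)
      (𝓝 ((kT μ x : ℝ) : ℂ)) := by
  have hG := tendsto_cauchyTC_vert hb hx (μ := μ)
  have hGpos : (0:ℝ) < cauchyT μ x := cauchyT_pos2 μ hb hx
  have hGne : ((cauchyT μ x : ℝ) : ℂ) ≠ 0 := by
    simp only [ne_eq, Complex.ofReal_eq_zero]
    exact ne_of_gt hGpos
  have h1 : Tendsto (fun y : ℝ => ((x:ℂ) + y * Complex.I)) (𝓝[>] 0) (𝓝 (x:ℂ)) := by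
    have : ContinuousAt (fun y : ℝ => ((x:ℂ) + y * Complex.I)) 0 := by fun_prop
    have := this.tendsto
    simp only [Complex.ofReal_zero, zero_mul, add_zero] at this
    exact this.mono_left nhdsWithin_le_nhds
  have h2 := h1.sub (hG.inv₀ hGne)
  simp only [kTC, kT]
  convert h2 using 2
  push_cast
  ring

lemma continuousAt_cauchyT (hb : μ (Set.Ioi b) = 0) {x : ℝ} (hx : b < x) :
    ContinuousAt (cauchyT μ) x := by
  have hmem : Set.Ioi ((x + b)/2) ∈ 𝓝 x := Ioi_mem_nhds (by linarith)
  refine continuousAt_of_dominated ?_ ?_ (integrable_const (((x + b)/2 - b)⁻¹)) ?_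
  · filter_upwards with x'
    exact (measurable_const.sub measurable_id).inv.aestronglyMeasurable
  · filter_upwards [hmem] with x' hx'
    filter_upwards [ae_le_of_Ioi_null hb] with t ht
    simp only [Set.mem_Ioi] at hx'
    have h1 : 0 < x' - t := by linarith
    rw [Real.norm_eq_abs, abs_of_pos (inv_pos.2 h1)]
    exact inv_anti₀ (by linarith) (by linarith)
  · filter_upwards [ae_le_of_Ioi_null hb] with t ht
    exact ContinuousAt.inv₀ (by fun_prop) (by intro h; linarith [sub_eq_zero.mp h])

lemma Mgen_eq {θ : ℝ} (hθ : 0 < θ) : Mgen μ θ = θ⁻¹ * cauchyT μ θ⁻¹ := by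
  rw [Mgen, cauchyT, ← integral_const_mul]
  congr 1
  ext t
  rw [← mul_inv]
  congr 1
  field_simp

lemma kMean_eq_kT (hb : μ (Set.Ioi b) = 0) {θ : ℝ} (hθ : 0 < θ) (hx : b < θ⁻¹) :
    kMean μ θ = kT μ θ⁻¹ := by
  have hG : 0 < cauchyT μ θ⁻¹ := cauchyT_pos2 μ hb hx
  rw [kMean, Mgen_eq hθ, kT]
  have hθM : θ * (θ⁻¹ * cauchyT μ θ⁻¹) = cauchyT μ θ⁻¹ := by
    field_simp
  rw [hθM, sub_div, mul_div_assoc, div_self (ne_of_gt hG), mul_one, one_div]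

lemma Bv_le {B : ℝ} (hB : μ (Set.Ioi B) = 0) : Bv μ ≤ max 0 B := by
  rw [Bv]
  by_cases hbdd : BddBelow {b : ℝ | μ (Set.Ioi b) = 0}
  · exact max_le_max le_rfl (csInf_le hbdd hB)
  · rw [Real.sInf_of_not_bddBelow hbdd]
    simp

lemma prob_eq_dirac (h : μ ({m0}ᶜ) = 0) : μ = Measure.dirac m0 := by
  ext s hs
  rw [Measure.dirac_apply' m0 hs]
  by_cases hm : m0 ∈ s
  · rw [Set.indicator_of_mem hm]
    have h1 : μ {m0} = 1 := by
      have h2 := measure_compl (MeasurableSet.singleton m0) (measure_ne_top μ _)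
      rw [h, measure_univ] at h2
      exact le_antisymm prob_le_one (tsub_eq_zero_iff_le.mp h2.symm)
    refine le_antisymm prob_le_one ?_
    calc (1:ENNReal) = μ {m0} := h1.symm
      _ ≤ μ s := measure_mono (Set.singleton_subset_iff.mpr hm)
  · rw [Set.indicator_of_notMem hm]
    refine measure_mono_null ?_ h
    intro t ht
    simp only [Set.mem_compl_iff, Set.mem_singleton_iff]
    intro he
    exact hm (he ▸ ht)

lemma kMean_eq_comp (hb : μ (Set.Ioi b) = 0) {θ : ℝ} (hθ : 0 < θ) (hθb : θ * b < 1) :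
    kMean μ θ = θ⁻¹ - (cauchyT μ θ⁻¹)⁻¹ := by
  have hbinv : b < θ⁻¹ := by
    rcases le_or_gt b 0 with h | h
    · exact lt_of_le_of_lt h (inv_pos.2 hθ)
    · rw [lt_inv_comm₀ h hθ] at *
      · rw [inv_eq_one_div, lt_div_iff₀ h]
        linarith [hθb]
  have hG : 0 < cauchyT μ θ⁻¹ := cauchyT_pos2 μ hb hbinv
  rw [kMean, Mgen_eq hθ]
  have hθM : θ * (θ⁻¹ * cauchyT μ θ⁻¹) = cauchyT μ θ⁻¹ := by field_simp
  rw [hθM, sub_div, mul_div_assoc, div_self (ne_of_gt hG), mul_one, one_div]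

lemma continuousAt_kMean (hb : μ (Set.Ioi b) = 0) {θ : ℝ} (hθ : 0 < θ) (hθb : θ * b < 1) :
    ContinuousAt (kMean μ) θ := by
  have hbinv : b < θ⁻¹ := by
    rcases le_or_gt b 0 with h | h
    · exact lt_of_le_of_lt h (inv_pos.2 hθ)
    · rw [lt_inv_comm₀ h hθ, inv_eq_one_div, lt_div_iff₀ h]
      linarith [hθb]
  have hG : 0 < cauchyT μ θ⁻¹ := cauchyT_pos2 μ hb hbinv
  have hcomp : ContinuousAt (fun t : ℝ => t⁻¹ - (cauchyT μ t⁻¹)⁻¹) θ := by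
    have h1 : ContinuousAt (fun t : ℝ => t⁻¹) θ := continuousAt_inv₀ (ne_of_gt hθ)
    have h2 : ContinuousAt (cauchyT μ) θ⁻¹ := continuousAt_cauchyT hb hbinv
    have h3 : ContinuousAt (fun t : ℝ => cauchyT μ t⁻¹) θ := h2.comp h1
    exact h1.sub (ContinuousAt.inv₀ h3 (ne_of_gt hG))
  refine ContinuousAt.congr hcomp ?_
  have hopen : IsOpen {t : ℝ | 0 < t ∧ t * b < 1} := by
    have : {t : ℝ | 0 < t ∧ t * b < 1}
        = Set.Ioi 0 ∩ (fun t : ℝ => t * b) ⁻¹' (Set.Iio 1) := by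
      ext t; simp [Set.mem_Ioi, Set.mem_Iio]
    rw [this]
    exact isOpen_Ioi.inter ((continuous_mul_right b).isOpen_preimage _ isOpen_Iio)
  refine Filter.eventuallyEq_of_mem (hopen.mem_nhds ⟨hθ, hθb⟩) ?_
  intro t ⟨ht1, ht2⟩
  exact (kMean_eq_comp hb ht1 ht2).symm
end BPVHelpers

section BPVHelpers2
variable {ν ρ : Measure ℝ} [IsProbabilityMeasure ν] [IsProbabilityMeasure ρ] {b m0 α : ℝ}

lemma inv_W_eq (hK : ∀ z : ℂ, 0 < z.im → kTC ρ z = (α : ℂ) * kTC ν z)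
    {z : ℂ} (hz : 0 < z.im) :
    cauchyTC ρ z = (z - (α:ℂ) * kTC ν z)⁻¹ := by
  have h1 := hK z hz
  have h2 : (cauchyTC ρ z)⁻¹ = z - (α:ℂ) * kTC ν z := by
    rw [← h1, kTC]; ring
  rw [← h2, inv_inv]

lemma im_Gρ_bound (hK : ∀ z : ℂ, 0 < z.im → kTC ρ z = (α : ℂ) * kTC ν z)
    (hα : 0 < α) (C2 : ℝ)
    (hC2 : ∀ z : ℂ, b + 1 ≤ z.re → |z.im| ≤ 1 → ‖kTC ν z - (m0:ℂ)‖ ≤ C2)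
    {x y : ℝ} (hx : b + 1 ≤ x) (hx2 : α * (|m0| + C2) + 1 ≤ x)
    (hy : 0 < y) (hy2 : y ≤ 1) :
    |(cauchyTC ρ ((x:ℂ) + y * Complex.I)).im| ≤ 1 + α * (|m0| + C2) := by
  set z : ℂ := (x:ℂ) + y * Complex.I with hzdef
  have hzre : z.re = x := by simp [hzdef]
  have hzim : z.im = y := by simp [hzdef]
  have hzim0 : 0 < z.im := by rw [hzim]; exact hy
  set K := kTC ν z with hKdef
  have hKnorm : ‖K - (m0:ℂ)‖ ≤ C2 := hC2 z (by rw [hzre]; exact hx) (by rw [hzim]; rw [abs_of_pos hy]; exact hy2)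
  have hC2nn : 0 ≤ C2 := le_trans (norm_nonneg _) hKnorm
  have hKre : |K.re| ≤ |m0| + C2 := by
    have h0 : |K.re - m0| ≤ C2 := by
      calc |K.re - m0| = |(K - (m0:ℂ)).re| := by simp
        _ ≤ ‖K - (m0:ℂ)‖ := Complex.abs_re_le_norm _
        _ ≤ C2 := hKnorm
    calc |K.re| = |m0 + (K.re - m0)| := by ring_nf
      _ ≤ |m0| + |K.re - m0| := abs_add_le _ _
      _ ≤ |m0| + C2 := by linarith
  have hKim : |K.im| ≤ C2 := by
    calc |K.im| = |(K - (m0:ℂ)).im| := by simp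
      _ ≤ ‖K - (m0:ℂ)‖ := Complex.abs_im_le_norm _
      _ ≤ C2 := hKnorm
  set W : ℂ := z - (α:ℂ) * K with hWdef
  have hWre : W.re = x - α * K.re := by
    simp [hWdef, hzre, Complex.mul_re]
  have hWim : W.im = y - α * K.im := by
    simp [hWdef, hzim, Complex.mul_im]
  have hWre1 : 1 ≤ W.re := by
    rw [hWre]
    have h1 : α * K.re ≤ α * (|m0| + C2) :=
      mul_le_mul_of_nonneg_left (le_trans (le_abs_self _) hKre) (le_of_lt hα)
    linarith
  have hWimabs : |W.im| ≤ 1 + α * C2 := by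
    rw [hWim]
    have h1 : |α * K.im| ≤ α * C2 := by
      rw [abs_mul, abs_of_pos hα]
      exact mul_le_mul_of_nonneg_left hKim (le_of_lt hα)
    have h2 := abs_le.mp h1
    rw [abs_le]
    constructor <;> [linarith; linarith]
  have hGρ : cauchyTC ρ z = W⁻¹ := inv_W_eq hK hzim0
  rw [hGρ, Complex.inv_im]
  have hnS : 1 ≤ Complex.normSq W := by
    rw [Complex.normSq_apply]
    nlinarith [sq_nonneg W.im]
  have hnS0 : 0 < Complex.normSq W := by linarith
  rw [abs_div, abs_neg, abs_of_pos hnS0, div_le_iff₀ hnS0]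
  have hαC2 : 0 ≤ α * C2 := mul_nonneg (le_of_lt hα) hC2nn
  calc |W.im| ≤ 1 + α * C2 := hWimabs
    _ ≤ (1 + α * C2) * Complex.normSq W := by nlinarith
    _ ≤ (1 + α * (|m0| + C2)) * Complex.normSq W := by
        have : α * C2 ≤ α * (|m0| + C2) :=
          mul_le_mul_of_nonneg_left (by linarith [abs_nonneg m0]) (le_of_lt hα)
        nlinarith

lemma tendsto_im_Gρ (hb : ν (Set.Ioi b) = 0)
    (hK : ∀ z : ℂ, 0 < z.im → kTC ρ z = (α : ℂ) * kTC ν z) (hα : 0 < α)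
    {x : ℝ} (hx : b + 1 ≤ x) (hx2 : α * |kT ν x| + 1 ≤ x) :
    Tendsto (fun y : ℝ => (cauchyTC ρ ((x:ℂ) + y * Complex.I)).im) (𝓝[>] 0) (𝓝 0) := by
  have hbx : b < x := by linarith
  have hKv := tendsto_kTC_vert hb hbx
  set Wx : ℂ := (x:ℂ) - (α:ℂ) * ((kT ν x : ℝ) : ℂ) with hWx
  have hWxne : Wx ≠ 0 := by
    intro h
    have : Wx.re = 0 := by rw [h]; simp
    rw [hWx] at this
    simp only [Complex.sub_re, Complex.ofReal_re, Complex.mul_re, Complex.ofReal_im] at this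
    have h2 : α * kT ν x ≤ α * |kT ν x| :=
      mul_le_mul_of_nonneg_left (le_abs_self _) (le_of_lt hα)
    have h3 : α * |kT ν x| ≥ 0 := mul_nonneg (le_of_lt hα) (abs_nonneg _)
    have h4 : -(α * kT ν x) ≤ α * |kT ν x| := by
      rw [← abs_neg (kT ν x)] at *
      calc -(α * kT ν x) = α * (-(kT ν x)) := by ring
        _ ≤ α * |-(kT ν x)| := mul_le_mul_of_nonneg_left (le_abs_self _) (le_of_lt hα)
    simp only [Complex.ofReal_im, mul_zero, sub_zero] at this
    nlinarith
  have h1 : Tendsto (fun y : ℝ => ((x:ℂ) + y * Complex.I) - (α:ℂ) * kTC ν ((x:ℂ) + y * Complex.I))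
      (𝓝[>] 0) (𝓝 Wx) := by
    have hz : Tendsto (fun y : ℝ => ((x:ℂ) + y * Complex.I)) (𝓝[>] 0) (𝓝 (x:ℂ)) := by
      have hc : ContinuousAt (fun y : ℝ => ((x:ℂ) + y * Complex.I)) 0 := by fun_prop
      have := hc.tendsto
      simp only [Complex.ofReal_zero, zero_mul, add_zero] at this
      exact this.mono_left nhdsWithin_le_nhds
    exact hz.sub (hKv.const_mul _)
  have h2 : Tendsto (fun y : ℝ => cauchyTC ρ ((x:ℂ) + y * Complex.I)) (𝓝[>] (0:ℝ)) (𝓝 Wx⁻¹) := by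
    have h3 : ∀ᶠ y : ℝ in 𝓝[>] (0:ℝ), cauchyTC ρ ((x:ℂ) + y * Complex.I)
        = (((x:ℂ) + y * Complex.I) - (α:ℂ) * kTC ν ((x:ℂ) + y * Complex.I))⁻¹ := by
      filter_upwards [self_mem_nhdsWithin] with y hy
      exact inv_W_eq hK (by simpa using hy)
    refine Tendsto.congr' ?_ (h1.inv₀ hWxne)
    filter_upwards [h3] with y hy using hy.symm
  have h4 : Wx⁻¹.im = 0 := by
    have : Wx = ((x - α * kT ν x : ℝ) : ℂ) := by rw [hWx]; push_cast; ring
    rw [this, ← Complex.ofReal_inv]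
    simp
  have := (Complex.continuous_im.tendsto _).comp h2
  rwa [h4] at this
end BPVHelpers2

section BPVHelpers3
variable {ρ : Measure ℝ} [IsProbabilityMeasure ρ]

lemma poisson_inner {y : ℝ} (hy : 0 < y) (t c d : ℝ) (hcd : c ≤ d) :
    ∫ x in Set.Ioc c d, y / ((x - t)^2 + y^2)
      = Real.arctan ((d - t)/y) - Real.arctan ((c - t)/y) := by
  rw [← intervalIntegral.integral_of_le hcd]
  have hpt : ∀ x : ℝ, y / ((x - t)^2 + y^2) = y⁻¹ * (1 + ((x - t)/y)^2)⁻¹ := by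
    intro x
    rw [div_pow, ← mul_inv]
    congr 1
    field_simp
    ring
  simp_rw [hpt]
  rw [intervalIntegral.integral_const_mul]
  have h1 : (fun x : ℝ => (1 + ((x - t)/y)^2)⁻¹)
      = fun x : ℝ => (fun u : ℝ => (1 + (u/y)^2)⁻¹) (x - t) := rfl
  rw [h1, intervalIntegral.integral_comp_sub_right (fun u : ℝ => (1 + (u/y)^2)⁻¹) t]
  rw [intervalIntegral.integral_comp_div (fun u : ℝ => (1 + u^2)⁻¹) (ne_of_gt hy)]
  rw [integral_inv_one_add_sq, smul_eq_mul]
  rw [← mul_assoc, inv_mul_cancel₀ (ne_of_gt hy), one_mul]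

lemma A_eq {y : ℝ} (hy : 0 < y) {c d : ℝ} (hcd : c ≤ d) :
    ∫ x in Set.Ioc c d, (∫ t, y / ((x - t)^2 + y^2) ∂ρ)
      = ∫ t, (Real.arctan ((d - t)/y) - Real.arctan ((c - t)/y)) ∂ρ := by
  haveI : IsFiniteMeasure (volume.restrict (Set.Ioc c d)) :=
    ⟨by rw [Measure.restrict_apply_univ]; exact measure_Ioc_lt_top⟩
  have hswap := MeasureTheory.integral_integral_swap
    (f := fun (x : ℝ) (t : ℝ) => y / ((x - t)^2 + y^2))
    (μ := volume.restrict (Set.Ioc c d)) (ν := ρ) ?_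
  · rw [hswap]
    refine integral_congr_ae ?_
    filter_upwards with t
    exact poisson_inner hy t c d hcd
  · refine Integrable.mono' (integrable_const (y⁻¹)) ?_ ?_
    · apply Continuous.aestronglyMeasurable
      refine Continuous.div continuous_const ?_ ?_
      · fun_prop
      · intro p
        have : 0 < (p.1 - p.2)^2 + y^2 := by positivity
        exact ne_of_gt this
    · filter_upwards with p
      have h1 : y^2 ≤ (p.1 - p.2)^2 + y^2 := by nlinarith [sq_nonneg (p.1 - p.2)]
      rw [Real.norm_eq_abs, Function.uncurry]
      rw [abs_of_pos (by positivity)]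
      rw [div_le_iff₀ (by positivity), inv_mul_eq_div, le_div_iff₀ hy]
      nlinarith

lemma rho_Ioi_null (X M3 : ℝ)
    (hbd : ∀ x y : ℝ, X ≤ x → 0 < y → y ≤ 1 →
      |(cauchyTC ρ ((x:ℂ) + y * Complex.I)).im| ≤ M3)
    (hlim : ∀ x : ℝ, X ≤ x →
      Tendsto (fun y : ℝ => (cauchyTC ρ ((x:ℂ) + y * Complex.I)).im) (𝓝[>] (0:ℝ)) (𝓝 0)) :
    ρ (Set.Ioi (X + 1)) = 0 := by
  have key : ∀ c' d' : ℝ, X + 1 ≤ c' → c' ≤ d' → ρ (Set.Ioc c' d') = 0 := by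
    intro c' d' hc' hcd'
    set c := c' - 1 with hc
    set d := d' + 1 with hd
    have hcX : X ≤ c := by simp [hc]; linarith
    have hcd : c ≤ d := by simp [hc, hd]; linarith
    set A : ℝ → ℝ := fun y =>
      ∫ x in Set.Ioc c d, (-(cauchyTC ρ ((x:ℂ) + y * Complex.I)).im) with hA
    -- A tends to 0
    have hA0 : Tendsto A (𝓝[>] (0:ℝ)) (𝓝 0) := by
      have htend := MeasureTheory.tendsto_integral_filter_of_dominated_convergence
        (μ := volume.restrict (Set.Ioc c d)) (l := 𝓝[>] (0:ℝ))
        (F := fun y x => -(cauchyTC ρ ((x:ℂ) + y * Complex.I)).im) (f := fun _ => (0:ℝ))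
        (fun _ => |M3|) ?_ ?_ (integrable_const _) ?_
      · simpa using htend
      · filter_upwards [self_mem_nhdsWithin] with y hy
        have hy' : 0 < y := hy
        apply Measurable.aestronglyMeasurable
        apply Measurable.neg
        exact (Complex.measurable_im.comp (continuous_cauchyTC_horiz ρ hy').measurable)
      · have hev : Set.Ioc (0:ℝ) 1 ∈ 𝓝[>] (0:ℝ) := by
          apply Ioc_mem_nhdsGT_of_mem
          constructor <;> norm_num
        filter_upwards [hev] with y hy
        filter_upwards [ae_restrict_mem measurableSet_Ioc] with x hx
        rw [norm_neg, Real.norm_eq_abs]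
        refine le_trans (hbd x y (le_trans hcX (le_of_lt hx.1)) hy.1 hy.2) (le_abs_self M3)
      · filter_upwards [ae_restrict_mem measurableSet_Ioc] with x hx
        have := (hlim x (le_trans hcX (le_of_lt hx.1))).neg
        rwa [neg_zero] at this
    -- lower bound for A
    have hA1 : ∀ y : ℝ, 0 < y → y ≤ 1 →
        2 * Real.arctan (1/y) * (ρ (Set.Ioc c' d')).toReal ≤ A y := by
      intro y hy hy1
      have harct : 0 ≤ Real.arctan (1/y) := by
        rw [← Real.arctan_zero]
        exact Real.arctan_strictMono.monotone (by positivity)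
      have him : ∀ x : ℝ, -(cauchyTC ρ ((x:ℂ) + y * Complex.I)).im
          = ∫ t, y / ((x - t)^2 + y^2) ∂ρ := by
        intro x
        have hz : (0:ℝ) < ((x:ℂ) + y * Complex.I).im := by simp [hy]
        rw [cauchyTC_im ρ hz, neg_neg]
        congr 1
        ext t
        congr 2 <;> simp
      have hstep : A y = ∫ t, (Real.arctan ((d - t)/y) - Real.arctan ((c - t)/y)) ∂ρ := by
        rw [hA]
        simp only [him]
        exact A_eq hy hcd
      rw [hstep]
      have hgint : Integrable (fun t => Real.arctan ((d - t)/y) - Real.arctan ((c - t)/y)) ρ := by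
        refine Integrable.mono' (integrable_const Real.pi) ?_ ?_
        · apply Continuous.aestronglyMeasurable
          exact (Real.continuous_arctan.comp (by fun_prop)).sub
            (Real.continuous_arctan.comp (by fun_prop))
        · filter_upwards with t
          rw [Real.norm_eq_abs, abs_sub_le_iff]
          have l1 := Real.arctan_lt_pi_div_two ((d - t)/y)
          have l2 := Real.arctan_lt_pi_div_two ((c - t)/y)
          have l3 := Real.neg_pi_div_two_lt_arctan ((d - t)/y)
          have l4 := Real.neg_pi_div_two_lt_arctan ((c - t)/y)
          constructor <;> linarith
      have hnn : 0 ≤ᵐ[ρ] fun t => Real.arctan ((d - t)/y) - Real.arctan ((c - t)/y) := by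
        filter_upwards with t
        simp only [Pi.zero_apply, sub_nonneg]
        apply Real.arctan_strictMono.monotone
        gcongr
        all_goals (simp only [hc, hd]; linarith)
      have chain1 : ∫ t in Set.Ioc c' d',
          (Real.arctan ((d - t)/y) - Real.arctan ((c - t)/y)) ∂ρ
          ≤ ∫ t, (Real.arctan ((d - t)/y) - Real.arctan ((c - t)/y)) ∂ρ :=
        setIntegral_le_integral hgint hnn
      have chain2 : ∫ _t in Set.Ioc c' d', (2 * Real.arctan (1/y)) ∂ρ
          ≤ ∫ t in Set.Ioc c' d',
            (Real.arctan ((d - t)/y) - Real.arctan ((c - t)/y)) ∂ρ := by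
        refine setIntegral_mono_on (integrableOn_const (measure_ne_top _ _) enorm_ne_top)
          hgint.integrableOn measurableSet_Ioc ?_
        intro t ht
        have h1 : Real.arctan (1/y) ≤ Real.arctan ((d - t)/y) := by
          apply Real.arctan_strictMono.monotone
          gcongr
          simp only [hd]
          linarith [ht.2]
        have h2 : Real.arctan ((c - t)/y) ≤ - Real.arctan (1/y) := by
          rw [← Real.arctan_neg]
          apply Real.arctan_strictMono.monotone
          rw [neg_div'] 
          gcongr
          simp only [hc]
          linarith [ht.1]
        linarith
      have chain3 : ∫ _t in Set.Ioc c' d', (2 * Real.arctan (1/y)) ∂ρ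
          = 2 * Real.arctan (1/y) * (ρ (Set.Ioc c' d')).toReal := by
        rw [setIntegral_const, smul_eq_mul, mul_comm]; rfl
      linarith
    -- conclude
    set L : ℝ := (ρ (Set.Ioc c' d')).toReal with hL
    have hL0 : 0 ≤ L := ENNReal.toReal_nonneg
    have htL : Tendsto (fun y : ℝ => 2 * Real.arctan (1/y) * L) (𝓝[>] (0:ℝ))
        (𝓝 (2 * (Real.pi/2) * L)) := by
      have ht1 : Tendsto (fun y : ℝ => 1/y) (𝓝[>] (0:ℝ)) atTop := by
        simpa [one_div] using tendsto_inv_nhdsGT_zero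
      have ht2 : Tendsto (fun y : ℝ => Real.arctan (1/y)) (𝓝[>] (0:ℝ)) (𝓝 (Real.pi/2)) :=
        (Real.tendsto_arctan_atTop.mono_right nhdsWithin_le_nhds).comp ht1
      exact (ht2.const_mul 2).mul_const L
    have hle : 2 * (Real.pi/2) * L ≤ 0 := by
      refine le_of_tendsto_of_tendsto htL hA0 ?_
      have hev : Set.Ioc (0:ℝ) 1 ∈ 𝓝[>] (0:ℝ) := Ioc_mem_nhdsGT_of_mem (by constructor <;> norm_num)
      filter_upwards [hev] with y hy
      exact hA1 y hy.1 hy.2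
    have hLz : L = 0 := by nlinarith [Real.pi_pos]
    rw [hL] at hLz
    exact (ENNReal.toReal_eq_zero_iff _).mp hLz |>.resolve_right (measure_ne_top ρ _)
  have hunion : Set.Ioi (X+1) = ⋃ n : ℕ, Set.Ioc (X+1) ((X+1) + (n+1)) := by
    ext t
    simp only [Set.mem_Ioi, Set.mem_iUnion, Set.mem_Ioc]
    constructor
    · intro ht
      obtain ⟨n, hn⟩ := exists_nat_ge (t - (X+1))
      exact ⟨n, ht, by push_cast; linarith⟩
    · rintro ⟨n, hn, -⟩; exact hn
  rw [hunion]
  refine measure_iUnion_null_iff.mpr (fun n => key _ _ le_rfl ?_)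
  nlinarith [Nat.cast_nonneg (α := ℝ) n]
end BPVHelpers3



/-- if `ν` is a non-degenerate probability measure with support bounded
from above and finite mean `m₀ = m₀(ν)`, `α > 0`, and `ρ = ν^{⊎α}` is the boolean
convolution power (characterized by `K_ρ = α K_ν` on the upper half-plane), then the
variance functions `V_ν, V_ρ` of the generated CSK families exist (they are related to
the pseudo-variance functions by `𝕍(m)/m = V(m)/(m - mean)`), and in a right
neighborhood of `α m₀` one has `V_ρ(m) = α V_ν(m/α) + m (m - α m₀)(1/α - 1)`. -/
theorem boolean_power_variance
    (ν ρ : Measure ℝ) [IsProbabilityMeasure ν] [IsProbabilityMeasure ρ]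
    (hnd : ∀ a : ℝ, ν ≠ Measure.dirac a)
    (b : ℝ) (hb : ν (Set.Ioi b) = 0)
    (hint : Integrable (fun x : ℝ => x) ν)
    (m0 : ℝ) (hm0 : m0 = ∫ x, x ∂ν)
    (hm0lim : Tendsto (kMean ν) (𝓝[>] (0 : ℝ)) (𝓝 m0))
    (α : ℝ) (hα : 0 < α)
    (hK : ∀ z : ℂ, 0 < z.im → kTC ρ z = (α : ℂ) * kTC ν z)
    (ψν ψρ : ℝ → ℝ)
    (hψν : ∀ θ : ℝ, 0 < θ → θ * Bv ν < 1 → ψν (kMean ν θ) = θ)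
    (hψρ : ∀ θ : ℝ, 0 < θ → θ * Bv ρ < 1 → ψρ (kMean ρ θ) = θ) :
    ∃ ε > 0, ∃ Vν Vρ : ℝ → ℝ,
      (∀ m : ℝ, m0 < m → m < m0 + ε →
        pseudoVar ψν m / m = Vν m / (m - m0)) ∧
      (∀ m : ℝ, α * m0 < m → m < α * m0 + ε →
        pseudoVar ψρ m / m = Vρ m / (m - α * m0)) ∧
      (∀ m : ℝ, α * m0 < m → m < α * m0 + ε →
        Vρ m = α * Vν (m / α) + m * (m - α * m0) * (1 / α - 1)) := by
  classical
  have hndm : ∀ m : ℝ, ν ({m}ᶜ) ≠ 0 := fun m h => hnd m (prob_eq_dirac h)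
  have hm0b : m0 ≤ b := mean_le hb hint hm0
  set C1 : ℝ := ∫ t, |t - m0| ∂ν with hC1def
  set C2 : ℝ := 2 * C1 * (1 + b - m0) with hC2def
  set M3 : ℝ := 1 + α * (|m0| + C2) with hM3def
  set X : ℝ := |b| + |α * (|m0| + C2)| + |α * (|m0| + |b|)| + 2 with hXdef
  have habs1 := le_abs_self b
  have habs2 := le_abs_self (α * (|m0| + C2))
  have habs3 := le_abs_self (α * (|m0| + |b|))
  have habs4 := abs_nonneg b
  have habs5 := abs_nonneg (α * (|m0| + C2))
  have habs6 := abs_nonneg (α * (|m0| + |b|))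
  have hXb : b + 1 ≤ X := by rw [hXdef]; linarith
  have hX2' : α * (|m0| + C2) + 1 ≤ X := by rw [hXdef]; linarith
  have hX2ge : (2:ℝ) ≤ X := by rw [hXdef]; linarith
  have hX3 : ∀ x : ℝ, X ≤ x → α * |kT ν x| + 1 ≤ x := by
    intro x hx
    have hbx : b < x := by linarith
    obtain ⟨hk1, hk2⟩ := kT_mem hb hint hm0 hbx
    have hkabs : |kT ν x| ≤ |m0| + |b| := by
      rw [abs_le]
      have h5 := neg_abs_le m0
      have h6 := le_abs_self b
      have h7 := abs_nonneg m0
      constructor <;> [linarith; linarith]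
    have h2 : α * |kT ν x| ≤ α * (|m0| + |b|) :=
      mul_le_mul_of_nonneg_left hkabs (le_of_lt hα)
    linarith
  have hC2bd : ∀ z : ℂ, b + 1 ≤ z.re → |z.im| ≤ 1 → ‖kTC ν z - (m0:ℂ)‖ ≤ C2 :=
    fun z h1 h2 => kTC_sub_mean_norm_le hb hint hm0 h1 h2
  have hρnull : ρ (Set.Ioi (X + 1)) = 0 := by
    refine rho_Ioi_null X M3 ?_ ?_
    · intro x y hx hy hy1
      exact im_Gρ_bound hK hα C2 hC2bd (by linarith) (by linarith) hy hy1
    · intro x hx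
      exact tendsto_im_Gρ hb hK hα (by linarith) (hX3 x hx)
  set Bρ : ℝ := X + 1 with hBρdef
  -- real K-transform relation
  have hkTrel : ∀ x : ℝ, max b Bρ < x → kT ρ x = α * kT ν x := by
    intro x hx
    have hbx : b < x := lt_of_le_of_lt (le_max_left _ _) hx
    have hBx : Bρ < x := lt_of_le_of_lt (le_max_right _ _) hx
    have hν := tendsto_kTC_vert hb hbx
    have hρ' := tendsto_kTC_vert hρnull hBx
    have heq : ∀ᶠ y : ℝ in 𝓝[>] (0:ℝ), kTC ρ ((x:ℂ) + y * Complex.I)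
        = (α:ℂ) * kTC ν ((x:ℂ) + y * Complex.I) := by
      filter_upwards [self_mem_nhdsWithin] with y hy
      refine hK _ ?_
      simpa using (hy : (0:ℝ) < y)
    have hρ2 : Tendsto (fun y : ℝ => (α:ℂ) * kTC ν ((x:ℂ) + y * Complex.I))
        (𝓝[>] (0:ℝ)) (𝓝 ((kT ρ x : ℝ) : ℂ)) := by
      refine Tendsto.congr' ?_ hρ'
      filter_upwards [heq] with y hy using hy
    have hρ3 := hν.const_mul ((α:ℂ))
    have huniq := tendsto_nhds_unique hρ2 hρ3
    have : ((kT ρ x : ℝ) : ℂ) = (((α * kT ν x : ℝ)) : ℂ) := by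
      rw [huniq]; push_cast; ring
    exact_mod_cast this
  -- choose θ*
  set D : ℝ := max (max (Bv ν) (Bv ρ)) (max b Bρ) with hDdef
  have hBρpos : (0:ℝ) < Bρ := by rw [hBρdef]; linarith
  have hDpos : 0 < D := by
    refine lt_of_lt_of_le hBρpos ?_
    exact le_trans (le_max_right b Bρ) (le_max_right _ _)
  set T : ℝ := (2*D)⁻¹ with hTdef
  have hT0 : 0 < T := by rw [hTdef]; positivity
  have hθprops : ∀ θ : ℝ, 0 < θ → θ ≤ T →
      θ * Bv ν < 1 ∧ θ * Bv ρ < 1 ∧ θ * max b Bρ < 1 ∧ θ * b < 1 ∧ b < θ⁻¹ := by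
    intro θ hθ hθT
    have hTD : T * D = 1/2 := by
      rw [hTdef]; field_simp
    have hgen : ∀ c : ℝ, 0 ≤ c → c ≤ D → θ * c < 1 := by
      intro c hc0 hcD
      have h1 : θ * c ≤ T * D :=
        mul_le_mul hθT hcD hc0 (le_of_lt hT0)
      rw [hTD] at h1
      linarith
    have hBvν : Bv ν ≤ D := le_trans (le_max_left _ _) (le_max_left _ _)
    have hBvρ : Bv ρ ≤ D := le_trans (le_max_right _ _) (le_max_left _ _)
    have hmax : max b Bρ ≤ D := le_max_right _ _
    have hmax0 : 0 ≤ max b Bρ := le_trans (le_of_lt hBρpos) (le_max_right _ _)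
    have h1 := hgen _ (le_max_left 0 _) hBvν
    have h2 := hgen _ (le_max_left 0 _) hBvρ
    have h3 := hgen _ hmax0 hmax
    have h4 : θ * b < 1 := by
      rcases le_or_gt b 0 with hb0 | hb0
      · nlinarith
      · exact hgen b (le_of_lt hb0) (le_trans (le_max_left b Bρ) hmax)
    have h5 : b < θ⁻¹ := by
      rcases le_or_gt b 0 with hb0 | hb0
      · exact lt_of_le_of_lt hb0 (inv_pos.2 hθ)
      · rw [lt_inv_comm₀ hb0 hθ, inv_eq_one_div, lt_div_iff₀ hb0]
        linarith
    exact ⟨h1, h2, h3, h4, h5⟩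
  -- kMean relation
  have hkMrel : ∀ θ : ℝ, 0 < θ → θ ≤ T → kMean ρ θ = α * kMean ν θ := by
    intro θ hθ hθT
    obtain ⟨-, -, h3, h4, h5⟩ := hθprops θ hθ hθT
    have hmaxinv : max b Bρ < θ⁻¹ := by
      have hmax0 : 0 ≤ max b Bρ := le_trans (le_of_lt hBρpos) (le_max_right _ _)
      rcases eq_or_lt_of_le hmax0 with he | hlt
      · exact lt_of_le_of_lt (le_of_eq he.symm) (inv_pos.2 hθ)
      · rw [lt_inv_comm₀ hlt hθ, inv_eq_one_div, lt_div_iff₀ hlt]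
        linarith
    have hBρinv : Bρ < θ⁻¹ := lt_of_le_of_lt (le_max_right b Bρ) hmaxinv
    have e1 : kMean ρ θ = kT ρ θ⁻¹ := by
      rw [kMean_eq_kT hρnull hθ hBρinv]
    have e2 : kMean ν θ = kT ν θ⁻¹ := by
      rw [kMean_eq_kT hb hθ h5]
    rw [e1, e2, hkTrel _ hmaxinv]
  -- kMean ν θ > m0 on (0, T]
  have hkgt : ∀ θ : ℝ, 0 < θ → θ ≤ T → m0 < kMean ν θ := by
    intro θ hθ hθT
    obtain ⟨-, -, -, -, h5⟩ := hθprops θ hθ hθT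
    rw [kMean_eq_kT hb hθ h5]
    exact kT_gt hb hint hm0 (hndm m0) h5
  set ε0 : ℝ := kMean ν T - m0 with hε0def
  have hε0 : 0 < ε0 := by
    rw [hε0def]
    have := hkgt T hT0 le_rfl
    linarith
  -- surjectivity of kMean ν onto (m0, m0+ε0]
  have hsurj : ∀ m : ℝ, m0 < m → m ≤ m0 + ε0 →
      ∃ θ : ℝ, 0 < θ ∧ θ ≤ T ∧ kMean ν θ = m := by
    intro m hm1 hm2
    have hev1 : ∀ᶠ θ : ℝ in 𝓝[>] (0:ℝ), kMean ν θ < m :=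
      hm0lim.eventually (Filter.Tendsto.eventually_lt_const hm1 tendsto_id)
    have hev2 : ∀ᶠ θ : ℝ in 𝓝[>] (0:ℝ), θ ∈ Set.Ioo (0:ℝ) T :=
      Ioo_mem_nhdsGT_of_mem ⟨le_rfl, hT0⟩
    obtain ⟨θ₀, hθ₀m, hθ₀mem⟩ := (hev1.and hev2).exists
    have hcont : ContinuousOn (kMean ν) (Set.Icc θ₀ T) := by
      intro θ hθ
      have hθ0 : 0 < θ := lt_of_lt_of_le hθ₀mem.1 hθ.1
      obtain ⟨-, -, -, h4, -⟩ := hθprops θ hθ0 hθ.2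
      exact (continuousAt_kMean hb hθ0 h4).continuousWithinAt
    have hIcc := intermediate_value_Icc (le_of_lt hθ₀mem.2) hcont
    have hmem : m ∈ Set.Icc (kMean ν θ₀) (kMean ν T) := ⟨le_of_lt hθ₀m, by rw [hε0def] at hm2; linarith⟩
    obtain ⟨θm, hθmIcc, hθmval⟩ := hIcc hmem
    exact ⟨θm, lt_of_lt_of_le hθ₀mem.1 hθmIcc.1, hθmIcc.2, hθmval⟩
  -- final assembly
  set ε : ℝ := min ε0 (α * ε0) with hεdef
  have hε : 0 < ε := lt_min hε0 (mul_pos hα hε0)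
  refine ⟨ε, hε, fun m => pseudoVar ψν m / m * (m - m0),
    fun m => pseudoVar ψρ m / m * (m - α * m0), ?_, ?_, ?_⟩
  · intro m h1 h2
    rw [mul_div_cancel_right₀ _ (sub_ne_zero.mpr (ne_of_gt h1))]
  · intro m h1 h2
    rw [mul_div_cancel_right₀ _ (sub_ne_zero.mpr (ne_of_gt h1))]
  · intro m h1 h2
    set x : ℝ := m / α with hxdef
    have hm_eq : m = α * x := by rw [hxdef]; field_simp
    have hx1 : m0 < x := by
      rw [hxdef, lt_div_iff₀ hα]
      linarith
    have hx2 : x ≤ m0 + ε0 := by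
      rw [hxdef, div_le_iff₀ hα]
      have hεle : ε ≤ α * ε0 := min_le_right _ _
      nlinarith
    show pseudoVar ψρ m / m * (m - α * m0)
        = α * (pseudoVar ψν x / x * (x - m0)) + m * (m - α * m0) * (1 / α - 1)
    obtain ⟨θm, hθ1, hθ2, hθ3⟩ := hsurj x hx1 hx2
    obtain ⟨hp1, hp2, -, -, -⟩ := hθprops θm hθ1 hθ2
    have hψx : ψν x = θm := by rw [← hθ3]; exact hψν θm hθ1 hp1
    have hkρ : kMean ρ θm = m := by
      rw [hkMrel θm hθ1 hθ2, hθ3, ← hm_eq]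
    have hψm : ψρ m = θm := by rw [← hkρ]; exact hψρ θm hθ1 hp2
    by_cases hm0' : m = 0
    · have hx0 : x = 0 := by rw [hxdef, hm0', zero_div]
      rw [hm0', hx0]
      simp [pseudoVar]
    · have hx0 : x ≠ 0 := by
        intro h
        rw [h, mul_zero] at hm_eq
        exact hm0' hm_eq
      have hpm : pseudoVar ψρ m / m = (ψρ m)⁻¹ - m := by
        rw [pseudoVar, mul_div_cancel_left₀ _ hm0']
      have hpx : pseudoVar ψν x / x = (ψν x)⁻¹ - x := by
        rw [pseudoVar, mul_div_cancel_left₀ _ hx0]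
      rw [hpm, hpx, hψm, hψx, hm_eq]
      field_simp
      ring
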